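/- Let u : ℝ → ℝ be continuously differentiable with compact support. Then ∫_ℝ u(x)⁴ dx ≤ 2 (∫_ℝ u(x)² dx)^{3/2} (∫_ℝ u'(x)² dx)^{1/2}. -/

import Mathlib

open MeasureTheory Real Set

set_option maxHeartbeats 1000000 in
theorem stmt_7 (u : ℝ → ℝ) (hu : ContDiff ℝ 1 u) (hsupp : HasCompactSupport u) :
    ∫ x : ℝ, (u x)^4 ≤
      2 * (∫ x : ℝ, (u x)^2) ^ ((3:ℝ)/2) * (∫ x : ℝ, (deriv u x)^2) ^ ((1:ℝ)/2) := by
  have hucont : Continuous u := hu.continuous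
  have hudiff : Differentiable ℝ u := hu.differentiable one_ne_zero
  have hu'cont : Continuous (deriv u) := hu.continuous_deriv le_rfl
  have hsupp2 : HasCompactSupport (fun y => (u y)^2) :=
    hsupp.comp_left (g := fun t : ℝ => t ^ 2) (by simp)
  have hsupp4 : HasCompactSupport (fun y => (u y)^4) :=
    hsupp.comp_left (g := fun t : ℝ => t ^ 4) (by simp)
  set A := ∫ x : ℝ, (u x)^2 with hA
  set B := ∫ x : ℝ, (deriv u x)^2 with hB
  have hA0 : 0 ≤ A := integral_nonneg fun x => sq_nonneg _
  have hB0 : 0 ≤ B := integral_nonneg fun x => sq_nonneg _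
  -- integrabilities
  have hint2 : Integrable (fun x => (u x)^2) :=
    (hucont.pow 2).integrable_of_hasCompactSupport hsupp2
  have hint4 : Integrable (fun x => (u x)^4) :=
    (hucont.pow 4).integrable_of_hasCompactSupport hsupp4
  have hintprod : Integrable (fun y => 2 * (‖u y‖ * ‖deriv u y‖)) := by
    have hc : Continuous (fun y => 2 * (‖u y‖ * ‖deriv u y‖)) := by fun_prop
    refine hc.integrable_of_hasCompactSupport ?_
    refine HasCompactSupport.mul_left ?_
    exact (hsupp.norm).mul_right
  have hintuu' : Integrable (fun y => 2 * u y * deriv u y) := by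
    have hc : Continuous (fun y => 2 * u y * deriv u y) := by fun_prop
    refine hc.integrable_of_hasCompactSupport ?_
    have : HasCompactSupport (fun y => u y * deriv u y) := hsupp.mul_right
    simpa [mul_assoc, Pi.mul_def] using this.mul_left (f := fun _ : ℝ => (2:ℝ))
  -- Cauchy-Schwarz : ∫ ‖u‖ * ‖u'‖ ≤ A^(1/2) * B^(1/2)
  have hmemu : MemLp u (ENNReal.ofReal 2) := by
    simpa using hucont.memLp_of_hasCompactSupport (p := 2) hsupp
  have hmemu' : MemLp (deriv u) (ENNReal.ofReal 2) := by
    simpa using hu'cont.memLp_of_hasCompactSupport (p := 2) hsupp.deriv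
  have hCS : ∫ x : ℝ, ‖u x‖ * ‖deriv u x‖ ≤ A ^ ((1:ℝ)/2) * B ^ ((1:ℝ)/2) := by
    have h22 : Real.HolderConjugate 2 2 := by constructor <;> norm_num
    have hH := MeasureTheory.integral_mul_norm_le_Lp_mul_Lq (μ := (volume : Measure ℝ))
      (f := u) (g := deriv u) (p := 2) (q := 2) h22 hmemu hmemu'
    have e1 : ∀ y : ℝ, ‖y‖ ^ (2:ℝ) = y ^ 2 := by
      intro y
      rw [show (2:ℝ) = ((2:ℕ):ℝ) by norm_num, Real.rpow_natCast, Real.norm_eq_abs, sq_abs]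
    simp only [e1] at hH
    simpa [hA, hB] using hH
  -- pointwise bound : u x ^ 2 ≤ 2 * A^(1/2) * B^(1/2)
  have hptwise : ∀ x : ℝ, (u x)^2 ≤ 2 * (A ^ ((1:ℝ)/2) * B ^ ((1:ℝ)/2)) := by
    intro x
    have hsq : ContDiff ℝ 1 (fun y => (u y)^2) := hu.pow 2
    have hderiv : ∀ y : ℝ, deriv (fun z => (u z)^2) y = 2 * u y * deriv u y := by
      intro y
      have := ((hudiff y).hasDerivAt.pow 2)
      convert this.deriv using 1; rfl; norm_num
    have key : (u x)^2 = ∫ y in Iic x, 2 * u y * deriv u y := by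
      have h0 := HasCompactSupport.integral_Iic_deriv_eq hsq hsupp2 x
      simp only [hderiv] at h0
      exact h0.symm
    calc (u x)^2 = ∫ y in Iic x, 2 * u y * deriv u y := key
      _ ≤ ∫ y in Iic x, 2 * (‖u y‖ * ‖deriv u y‖) := by
          refine setIntegral_mono_on hintuu'.integrableOn hintprod.integrableOn
            measurableSet_Iic (fun y _ => ?_)
          calc 2 * u y * deriv u y ≤ |2 * u y * deriv u y| := le_abs_self _
            _ = 2 * (‖u y‖ * ‖deriv u y‖) := by
                simp [abs_mul, Real.norm_eq_abs, mul_assoc]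
      _ ≤ ∫ y, 2 * (‖u y‖ * ‖deriv u y‖) := by
          refine setIntegral_le_integral hintprod ?_
          filter_upwards with y
          positivity
      _ = 2 * ∫ y, ‖u y‖ * ‖deriv u y‖ := integral_const_mul 2 _
      _ ≤ 2 * (A ^ ((1:ℝ)/2) * B ^ ((1:ℝ)/2)) := by linarith [hCS]
  -- conclude
  have hfinal : ∫ x : ℝ, (u x)^4 ≤ 2 * (A ^ ((1:ℝ)/2) * B ^ ((1:ℝ)/2)) * A := by
    calc ∫ x : ℝ, (u x)^4 ≤ ∫ x : ℝ, 2 * (A ^ ((1:ℝ)/2) * B ^ ((1:ℝ)/2)) * (u x)^2 := by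
          refine integral_mono hint4 (hint2.const_mul _) (fun x => ?_)
          have h1 : (u x)^4 = (u x)^2 * (u x)^2 := by ring
          rw [h1]
          have := hptwise x
          nlinarith [sq_nonneg (u x)]
      _ = 2 * (A ^ ((1:ℝ)/2) * B ^ ((1:ℝ)/2)) * A := integral_const_mul _ _
  have hArw : A ^ ((3:ℝ)/2) = A * A ^ ((1:ℝ)/2) := by
    rw [show (3:ℝ)/2 = 1 + 1/2 by norm_num, Real.rpow_add' hA0 (by norm_num), Real.rpow_one]
  rw [hArw]
  calc ∫ x : ℝ, (u x)^4 ≤ 2 * (A ^ ((1:ℝ)/2) * B ^ ((1:ℝ)/2)) * A := hfinal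
    _ = 2 * (A * A ^ ((1:ℝ)/2)) * B ^ ((1:ℝ)/2) := by ring
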